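/- arXiv:1106.5522 — 5 statements merged into one kernel-verified Lean document; each statement's English description precedes it below -/
import Mathlib

section
/- If k is even and k < n, then the number D_k(n) of k-derangements in S_n is even. -/
def IsKDerangement (n k : ℕ) (σ : Equiv.Perm (Fin n)) : Prop :=
  ∀ X : Finset (Fin n), X.card = k → X.image σ ≠ X

lemma IsKDerangement.inv {n k : ℕ} {σ : Equiv.Perm (Fin n)}
    (h : IsKDerangement n k σ) : IsKDerangement n k σ⁻¹ := by
  intro X hX hfix
  refine h X hX ?_
  nth_rewrite 1 [← hfix]
  rw [Finset.image_image]
  simp [Function.comp_def]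

def derangementGraph (n k : ℕ) : SimpleGraph (Equiv.Perm (Fin n)) where
  Adj σ τ := σ ≠ τ ∧ IsKDerangement n k (σ * τ⁻¹)
  symm := by
    constructor
    rintro σ τ ⟨hne, h⟩
    exact ⟨hne.symm, by simpa [mul_inv_rev] using h.inv⟩
  loopless := by constructor; rintro σ ⟨hne, -⟩; exact hne rfl

noncomputable def numKDerangements (n k : ℕ) : ℕ :=
  Nat.card {σ : Equiv.Perm (Fin n) // IsKDerangement n k σ}

noncomputable def indepNum {V : Type*} (G : SimpleGraph V) : ℕ :=
  sSup {m | ∃ s : Finset V, (∀ a ∈ s, ∀ b ∈ s, a ≠ b → ¬ G.Adj a b) ∧ s.card = m}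

/-- Inserting a σ-invariant pair into a σ-invariant set keeps it invariant. -/
lemma aux_insert_pair {n : ℕ} (σ : Equiv.Perm (Fin n)) {X : Finset (Fin n)}
    (hX : X.image σ = X) {a b : Fin n} (ha : a ∉ X) (hb : b ∉ X) (hab : a ≠ b)
    (hpair : (σ a = b ∧ σ b = a) ∨ (σ a = a ∧ σ b = b)) :
    ∃ Y : Finset (Fin n), Y.card = X.card + 2 ∧ Y.image σ = Y := by
  refine ⟨insert a (insert b X), ?_, ?_⟩
  · rw [Finset.card_insert_of_notMem (by simp [hab, ha]),
      Finset.card_insert_of_notMem hb]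
  · rw [Finset.image_insert, Finset.image_insert, hX]
    rcases hpair with ⟨h1, h2⟩ | ⟨h1, h2⟩
    · rw [h1, h2, Finset.insert_comm]
    · rw [h1, h2]

/-- Every involution on `Fin n` has an invariant set of every even size `≤ n`. -/
lemma aux_invariant {n : ℕ} (σ : Equiv.Perm (Fin n)) (hσ : ∀ a, σ (σ a) = a) :
    ∀ m : ℕ, 2 * m ≤ n → ∃ X : Finset (Fin n), X.card = 2 * m ∧ X.image σ = X := by
  intro m
  induction m with
  | zero => exact fun _ => ⟨∅, by simp⟩
  | succ m ih =>
    intro hm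
    obtain ⟨X, hcard, hinv⟩ := ih (by omega)
    -- anything outside X maps outside X
    have hout : ∀ y : Fin n, y ∉ X → σ y ∉ X := by
      intro y hy hmem
      exact hy (by rw [← hσ y, ← hinv]; exact Finset.mem_image_of_mem σ hmem)
    have hXne : X ≠ Finset.univ := by
      intro h
      rw [h, Finset.card_univ, Fintype.card_fin] at hcard
      omega
    obtain ⟨x, hx⟩ : ∃ x, x ∉ X := by
      by_contra h
      push_neg at h
      exact hXne (Finset.eq_univ_of_forall h)
    by_cases hfx : σ x = x
    · -- x is a fixed point; find another point outside X ∪ {x}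
      have : (insert x X).card = 2 * m + 1 := by
        rw [Finset.card_insert_of_notMem hx, hcard]
      obtain ⟨y, hy⟩ : ∃ y, y ∉ insert x X := by
        by_contra h
        push_neg at h
        have h2 := Finset.eq_univ_of_forall h
        rw [h2, Finset.card_univ, Fintype.card_fin] at this
        omega
      simp only [Finset.mem_insert, not_or] at hy
      obtain ⟨hyx, hyX⟩ := hy
      by_cases hfy : σ y = y
      · obtain ⟨Y, h1, h2⟩ := aux_insert_pair σ hinv hx hyX (Ne.symm hyx)
          (Or.inr ⟨hfx, hfy⟩)
        exact ⟨Y, by omega, h2⟩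
      · have hσy : σ y ∉ X := hout y hyX
        obtain ⟨Y, h1, h2⟩ := aux_insert_pair σ hinv hyX hσy
          (fun h => hfy h.symm) (Or.inl ⟨rfl, hσ y⟩)
        exact ⟨Y, by omega, h2⟩
    · have hσx : σ x ∉ X := hout x hx
      obtain ⟨Y, h1, h2⟩ := aux_insert_pair σ hinv hx hσx
        (fun h => hfx h.symm) (Or.inl ⟨rfl, hσ x⟩)
      exact ⟨Y, by omega, h2⟩

/-- If `k` is even and `k < n`, then the number of `k`-derangements in `S_n` is even. -/
theorem even_numKDerangements_of_even (n k : ℕ) (hk : Even k) (hkn : k < n) :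
    Even (numKDerangements n k) := by
  classical
  set α := {σ : Equiv.Perm (Fin n) // IsKDerangement n k σ}
  let f : Function.End α := fun s => ⟨s.1⁻¹, s.2.inv⟩
  have hf2 : f ^ 2 ^ 1 = 1 := by
    funext s
    show ⟨s.1⁻¹⁻¹, _⟩ = s
    exact Subtype.ext (inv_inv s.1)
  haveI : Fact (Nat.Prime 2) := ⟨Nat.prime_two⟩
  have hempty : IsEmpty f.fixedPoints := by
    constructor
    rintro ⟨s, hs⟩
    have hinv : s.1⁻¹ = s.1 := congrArg Subtype.val hs
    have hinvol : ∀ a, s.1 (s.1 a) = a := by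
      intro a
      nth_rewrite 1 [← hinv]
      exact Equiv.symm_apply_apply s.1 a
    obtain ⟨m, hm⟩ := hk
    obtain ⟨X, hXc, hXinv⟩ := aux_invariant s.1 hinvol m (by omega)
    exact s.2 X (by omega) hXinv
  have hcard0 : Fintype.card f.fixedPoints = 0 := by
    exact Fintype.card_eq_zero
  have hmod := Equiv.Perm.card_fixedPoints_modEq (α := α) (p := 2) (n := 1) hf2
  rw [hcard0] at hmod
  have : numKDerangements n k = Fintype.card α := Nat.card_eq_fintype_card
  rw [this]
  exact even_iff_two_dvd.mpr (Nat.modEq_zero_iff_dvd.mp hmod)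
end

section
/- If k and n are both odd and k < n, then the number D_k(n) of k-derangements in S_n is even. -/
variable {α : Type*} [DecidableEq α]

/-- A finset closed under a fixed-point-free involution has even cardinality. -/
lemma even_card_of_invol (f : α → α) (hf : Function.Involutive f) :
    ∀ s : Finset α, (∀ x ∈ s, f x ∈ s) → (∀ x ∈ s, f x ≠ x) → Even s.card := by
  intro s
  induction s using Finset.strongInduction with
  | _ s ih =>
    intro hcl hnf
    rcases s.eq_empty_or_nonempty with rfl | ⟨x, hx⟩
    · simp
    · have hfx : f x ∈ s := hcl x hx
      have hne : f x ≠ x := hnf x hx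
      set s' := s \ {x, f x} with hs'
      have hss : s' ⊂ s := by
        refine Finset.sdiff_ssubset ?_ (by simp)
        intro y hy
        simp at hy
        rcases hy with rfl | rfl <;> assumption
      have h1 : Even s'.card := by
        refine ih s' hss ?_ ?_
        · intro y hy
          simp only [hs', Finset.mem_sdiff, Finset.mem_insert, Finset.mem_singleton] at hy ⊢
          obtain ⟨hys, hy1⟩ := hy
          refine ⟨hcl y hys, ?_⟩
          rintro (h | h)
          · exact hy1 (Or.inr (by rw [← h, hf]))
          · exact hy1 (Or.inl (hf.injective h))
        · intro y hy; exact hnf y (Finset.mem_sdiff.mp hy).1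
      have hsub : ({x, f x} : Finset α) ⊆ s := by
        intro y hy; simp at hy; rcases hy with rfl | rfl <;> assumption
      have hpair : ({x, f x} : Finset α).card = 2 := by
        rw [Finset.card_insert_of_notMem (by simp [hne.symm] : x ∉ ({f x} : Finset α)),
          Finset.card_singleton]
      have h2le : 2 ≤ s.card := hpair ▸ Finset.card_le_card hsub
      have hcard : s.card = s'.card + 2 := by
        have h := Finset.card_sdiff_add_card_eq_card hsub
        rw [hpair] at h
        rw [← hs'] at h
        omega
      rw [hcard]
      exact h1.add (by norm_num)

/-- In a finset closed under a fixed-point-free involution one can find invariant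
subsets of any even size. -/
lemma exists_invariant_subset (f : α → α) (hf : Function.Involutive f) :
    ∀ s : Finset α, (∀ x ∈ s, f x ∈ s) → (∀ x ∈ s, f x ≠ x) →
      ∀ m, 2 * m ≤ s.card → ∃ T ⊆ s, T.card = 2 * m ∧ T.image f = T := by
  intro s
  induction s using Finset.strongInduction with
  | _ s ih =>
    intro hcl hnf m hm
    rcases Nat.eq_zero_or_pos m with rfl | hmpos
    · exact ⟨∅, by simp⟩
    · have hs : s.Nonempty := Finset.card_pos.mp (by omega)
      obtain ⟨x, hx⟩ := hs
      have hfx : f x ∈ s := hcl x hx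
      have hne : f x ≠ x := hnf x hx
      set s' := s \ {x, f x} with hs'
      have hsub : ({x, f x} : Finset α) ⊆ s := by
        intro y hy; simp at hy; rcases hy with rfl | rfl <;> assumption
      have hss : s' ⊂ s := Finset.sdiff_ssubset hsub (by simp)
      have hpair : ({x, f x} : Finset α).card = 2 := by
        rw [Finset.card_insert_of_notMem (by simp [hne.symm] : x ∉ ({f x} : Finset α)),
          Finset.card_singleton]
      have h2le : 2 ≤ s.card := hpair ▸ Finset.card_le_card hsub
      have hcard : s.card = s'.card + 2 := by
        have h := Finset.card_sdiff_add_card_eq_card hsub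
        rw [hpair] at h
        rw [← hs'] at h
        omega
      have hcl' : ∀ y ∈ s', f y ∈ s' := by
        intro y hy
        simp only [hs', Finset.mem_sdiff, Finset.mem_insert, Finset.mem_singleton] at hy ⊢
        obtain ⟨hys, hy1⟩ := hy
        refine ⟨hcl y hys, ?_⟩
        rintro (h | h)
        · exact hy1 (Or.inr (by rw [← h, hf]))
        · exact hy1 (Or.inl (hf.injective h))
      obtain ⟨T, hTs, hTcard, hTinv⟩ := ih s' hss hcl'
        (fun y hy => hnf y (Finset.mem_sdiff.mp hy).1) (m - 1) (by omega)
      refine ⟨T ∪ {x, f x}, ?_, ?_, ?_⟩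
      · exact Finset.union_subset (hTs.trans (Finset.sdiff_subset)) hsub
      · have hdisj : Disjoint T ({x, f x} : Finset α) := by
          refine Finset.disjoint_left.mpr ?_
          intro y hyT hyp
          have := hTs hyT
          rw [hs', Finset.mem_sdiff] at this
          exact this.2 hyp
        rw [Finset.card_union_of_disjoint hdisj, hTcard,
          Finset.card_insert_of_notMem (by simp [hne.symm] : x ∉ ({f x} : Finset α)),
          Finset.card_singleton]
        omega
      · rw [Finset.image_union, hTinv]
        congr 1
        rw [Finset.image_insert, Finset.image_singleton, hf x]
        exact Finset.pair_comm _ _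

lemma not_isKDerangement_of_involutive {n k : ℕ} (hk : Odd k) (hn : Odd n) (hkn : k ≤ n)
    (σ : Equiv.Perm (Fin n)) (hinv : ∀ x, σ (σ x) = x) : ¬ IsKDerangement n k σ := by
  classical
  intro hσ
  set F := Finset.univ.filter (fun x => σ x = x) with hF
  set S := Finset.univ.filter (fun x => ¬ σ x = x) with hS
  have hFS : F.card + S.card = n := by
    rw [hF, hS, Finset.card_filter_add_card_filter_not, Finset.card_univ,
      Fintype.card_fin]
  have hcl : ∀ x ∈ S, σ x ∈ S := by
    intro x hx
    rw [hS, Finset.mem_filter] at hx ⊢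
    exact ⟨Finset.mem_univ _, fun h => hx.2 (σ.injective h)⟩
  have hnf : ∀ x ∈ S, σ x ≠ x := by
    intro x hx; exact (Finset.mem_filter.mp hx).2
  have hSeven : Even S.card :=
    even_card_of_invol σ hinv S hcl hnf
  obtain ⟨a, ha⟩ := hk
  obtain ⟨b, hb⟩ := hn
  obtain ⟨c, hc⟩ := hSeven
  by_cases hle : k ≤ F.card
  · obtain ⟨X, hXF, hXcard⟩ := Finset.exists_subset_card_eq hle
    refine hσ X hXcard ?_
    have : Finset.image σ X = Finset.image id X := by
      apply Finset.image_congr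
      intro x hx
      exact (Finset.mem_filter.mp (hXF hx)).2
    rw [this, Finset.image_id]
  · push_neg at hle
    have h2m : 2 * ((k - F.card) / 2) = k - F.card := by omega
    obtain ⟨T, hTS, hTcard, hTinv⟩ := exists_invariant_subset σ hinv S hcl hnf
      ((k - F.card) / 2) (by omega)
    have hdisj : Disjoint F T := by
      refine Finset.disjoint_left.mpr ?_
      intro x hxF hxT
      exact (Finset.mem_filter.mp (hTS hxT)).2 ((Finset.mem_filter.mp hxF).2)
    refine hσ (F ∪ T) ?_ ?_
    · rw [Finset.card_union_of_disjoint hdisj, hTcard]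
      omega
    · rw [Finset.image_union, hTinv]
      congr 1
      have : Finset.image σ F = Finset.image id F := by
        apply Finset.image_congr
        intro x hx
        exact (Finset.mem_filter.mp hx).2
      rw [this, Finset.image_id]

/-- If `k` and `n` are both odd and `k < n`, then the number of `k`-derangements
in `S_n` is even. -/
theorem even_numKDerangements_of_odd_odd (n k : ℕ) (hk : Odd k) (hn : Odd n) (hkn : k < n) :
    Even (numKDerangements n k) := by
  classical
  have : Fintype {σ : Equiv.Perm (Fin n) // IsKDerangement n k σ} := Fintype.ofFinite _
  rw [numKDerangements, Nat.card_eq_fintype_card, ← Finset.card_univ]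
  refine even_card_of_invol (fun p => ⟨p.1⁻¹, p.2.inv⟩) (fun p => by simp) Finset.univ
    (fun _ _ => Finset.mem_univ _) ?_
  rintro ⟨σ, hσ⟩ - h
  rw [Subtype.mk.injEq] at h
  refine not_isKDerangement_of_involutive hk hn hkn.le σ (fun x => ?_) hσ
  nth_rewrite 1 [← h]
  simp
end

section
/- If k is odd, n is even, and k < n, then the number D_k(n) of k-derangements in S_n is odd. -/
section Aux

variable {α : Type*} [DecidableEq α]

/-- Parity lemma: a finset closed under an involution has the same card parity as its
fixed-point set. -/
lemma card_filter_fixed_parity (f : α → α) (s : Finset α)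
    (hmap : ∀ a ∈ s, f a ∈ s) (hinv : ∀ a ∈ s, f (f a) = a) :
    s.card % 2 = (s.filter fun a => f a = a).card % 2 := by
  induction s using Finset.strongInduction with
  | _ s ih =>
    by_cases h : ∀ a ∈ s, f a = a
    · rw [Finset.filter_true_of_mem h]
    · push_neg at h
      obtain ⟨a, ha, hfa⟩ := h
      have hfas : f a ∈ s := hmap a ha
      have hffa : f (f a) = a := hinv a ha
      set t := s \ {a, f a} with ht
      have hsub : t ⊆ s := Finset.sdiff_subset
      have hssub : t ⊂ s := by
        refine Finset.ssubset_iff_of_subset hsub |>.mpr ⟨a, ha, by simp [ht]⟩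
      have hpair : ({a, f a} : Finset α) ⊆ s := by
        intro x hx; simp at hx; rcases hx with rfl | rfl <;> assumption
      have hcard : s.card = t.card + 2 := by
        have h2 : ({a, f a} : Finset α).card = 2 := by
          rw [Finset.card_insert_of_notMem (by simpa using (Ne.symm hfa)),
            Finset.card_singleton]
        have h3 := Finset.card_sdiff_of_subset hpair
        have hle := Finset.card_le_card hpair
        rw [h2] at h3 hle; rw [← ht] at h3
        omega
      have htmap : ∀ x ∈ t, f x ∈ t := by
        intro x hx
        rw [ht, Finset.mem_sdiff] at hx ⊢
        obtain ⟨hxs, hxne⟩ := hx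
        simp only [Finset.mem_insert, Finset.mem_singleton] at hxne
        push_neg at hxne
        refine ⟨hmap x hxs, ?_⟩
        simp only [Finset.mem_insert, Finset.mem_singleton]
        push_neg
        constructor
        · intro hxa
          exact hxne.2 (by rw [← hinv x hxs, hxa])
        · intro hxa
          exact hxne.1 (by rw [← hinv x hxs, hxa, hffa])
      have htinv : ∀ x ∈ t, f (f x) = x := fun x hx => hinv x (hsub hx)
      have hfilter : s.filter (fun x => f x = x) = t.filter fun x => f x = x := by
        ext x
        simp only [Finset.mem_filter, ht, Finset.mem_sdiff, Finset.mem_insert,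
          Finset.mem_singleton]
        constructor
        · rintro ⟨hxs, hx⟩
          refine ⟨⟨hxs, ?_⟩, hx⟩
          push_neg
          constructor
          · rintro rfl; exact hfa hx
          · rintro rfl; exact hfa (by rw [hffa] at hx; exact hx.symm)
        · rintro ⟨⟨hxs, _⟩, hx⟩; exact ⟨hxs, hx⟩
      rw [hfilter, ← ih t hssub htmap htinv, hcard]
      omega

lemma finset_image_eq_self {β : Type*} [DecidableEq β] (σ : Equiv.Perm β) (X : Finset β)
    (h : ∀ x ∈ X, σ x ∈ X) : X.image σ = X :=
  Finset.eq_of_subset_of_card_le (Finset.image_subset_iff.mpr h)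
    (by rw [Finset.card_image_of_injective _ σ.injective])

end Aux

section Perm

variable {n : ℕ}

lemma invol_apply {σ : Equiv.Perm (Fin n)} (h : σ * σ = 1) : ∀ x, σ (σ x) = x := by
  intro x
  have := Equiv.ext_iff.mp h x
  simpa [Equiv.Perm.mul_apply] using this

/-- For a fixed-point-free involution on `S`, `S` is invariant. -/
lemma maps_of_invol {σ : Equiv.Perm (Fin n)} (h1 : σ * σ = 1) {S : Finset (Fin n)}
    (hf : ∀ x ∈ S, σ x ≠ x) (hid : ∀ x ∉ S, σ x = x) : ∀ x ∈ S, σ x ∈ S := by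
  intro x hx
  by_contra hout
  have h2 := hid _ hout
  exact hf x hx ((h2.symm.trans (invol_apply h1 x)))

/-- Inside an invariant set of a fixed-point-free involution one can find invariant
subsets of any even size. -/
lemma exists_invariant_subset_s10 (σ : Equiv.Perm (Fin n)) (h1 : σ * σ = 1) :
    ∀ (m : ℕ) (S : Finset (Fin n)), (∀ x ∈ S, σ x ∈ S) → (∀ x ∈ S, σ x ≠ x) →
      2 * m ≤ S.card → ∃ Y, Y ⊆ S ∧ (∀ x ∈ Y, σ x ∈ Y) ∧ Y.card = 2 * m := by
  intro m
  induction m with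
  | zero => intro S _ _ _; exact ⟨∅, by simp⟩
  | succ m ih =>
    intro S hmap hfree hle
    have hSne : S.Nonempty := Finset.card_pos.mp (by omega)
    obtain ⟨a, ha⟩ := hSne
    have hsa : σ a ∈ S := hmap a ha
    have hsa_ne : σ a ≠ a := hfree a ha
    set t := S \ {a, σ a} with htdef
    have hpair : ({a, σ a} : Finset (Fin n)) ⊆ S := by
      intro x hx; simp at hx; rcases hx with rfl | rfl <;> assumption
    have hcardt : t.card = S.card - 2 := by
      have h2 : ({a, σ a} : Finset (Fin n)).card = 2 := by
        rw [Finset.card_insert_of_notMem (by simpa using (Ne.symm hsa_ne)),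
          Finset.card_singleton]
      have h3 := Finset.card_sdiff_of_subset hpair
      rw [h2] at h3; rw [← htdef] at h3; omega
    have htmap : ∀ x ∈ t, σ x ∈ t := by
      intro x hx
      rw [htdef, Finset.mem_sdiff] at hx ⊢
      obtain ⟨hxs, hxne⟩ := hx
      simp only [Finset.mem_insert, Finset.mem_singleton] at hxne
      push_neg at hxne
      refine ⟨hmap x hxs, ?_⟩
      simp only [Finset.mem_insert, Finset.mem_singleton]
      push_neg
      exact ⟨fun hxa => hxne.2 (by rw [← invol_apply h1 x, hxa]),
        fun hxa => hxne.1 (σ.injective hxa)⟩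
    have htfree : ∀ x ∈ t, σ x ≠ x := fun x hx => hfree x (Finset.sdiff_subset hx)
    obtain ⟨Y, hYsub, hYmap, hYcard⟩ := ih t htmap htfree (by omega)
    have haY : a ∉ Y := fun h => by simpa [htdef] using hYsub h
    have hsaY : σ a ∉ Y := fun h => by simpa [htdef] using hYsub h
    refine ⟨insert a (insert (σ a) Y), ?_, ?_, ?_⟩
    · intro x hx
      simp only [Finset.mem_insert] at hx
      rcases hx with rfl | rfl | hx
      · exact ha
      · exact hsa
      · exact Finset.sdiff_subset (hYsub hx)
    · intro x hx
      simp only [Finset.mem_insert] at hx ⊢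
      rcases hx with rfl | rfl | hx
      · exact Or.inr (Or.inl rfl)
      · exact Or.inl (invol_apply h1 a)
      · exact Or.inr (Or.inr (hYmap x hx))
    · rw [Finset.card_insert_of_notMem (by simp [haY, Ne.symm hsa_ne]),
        Finset.card_insert_of_notMem hsaY, hYcard]
      ring

end Perm

instance (n k : ℕ) : DecidablePred (IsKDerangement n k) := fun σ => by
  unfold IsKDerangement; infer_instance

section Fixed

variable {n k : ℕ}

/-- Characterization of the self-inverse `k`-derangements: they are exactly the
fixed-point-free involutions. -/
lemma fixed_iff (hk : Odd k) (hn : Even n) (hkn : k < n) (σ : Equiv.Perm (Fin n)) :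
    (IsKDerangement n k σ ∧ σ⁻¹ = σ) ↔ (σ * σ = 1 ∧ ∀ x, σ x ≠ x) := by
  constructor
  · rintro ⟨hder, hsym⟩
    have h1 : σ * σ = 1 := by
      nth_rewrite 1 [← hsym]; exact inv_mul_cancel σ
    refine ⟨h1, ?_⟩
    by_contra hfix
    push_neg at hfix
    obtain ⟨x, hx⟩ := hfix
    set F := Finset.univ.filter (fun y : Fin n => σ y = y) with hF
    set M := Finset.univ.filter (fun y : Fin n => ¬ σ y = y) with hM
    have hxF : x ∈ F := by simp [hF, hx]
    have hFM : F.card + M.card = n := by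
      rw [hF, hM, Finset.card_filter_add_card_filter_not]
      simp
    have hMmap : ∀ y ∈ M, σ y ∈ M := by
      intro y hy
      simp only [hM, Finset.mem_filter, Finset.mem_univ, true_and] at hy ⊢
      intro hc
      exact hy (hc.symm.trans (invol_apply h1 y))
    have hMfree : ∀ y ∈ M, σ y ≠ y := by
      intro y hy
      simpa [hM] using hy
    have hMeven : Even M.card := by
      have := card_filter_fixed_parity (fun y => σ y) M hMmap
        (fun y _ => invol_apply h1 y)
      have hemp : (M.filter fun y => σ y = y) = ∅ := by
        rw [Finset.filter_eq_empty_iff]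
        intro y hy
        exact hMfree y hy
      rw [hemp] at this
      simp only [Finset.card_empty] at this
      exact Nat.even_iff.mpr (by omega)
    have hFeven : Even F.card := by
      rw [Nat.even_iff] at hn hMeven ⊢
      omega
    have hFpos : 1 ≤ F.card := Finset.card_pos.mpr ⟨x, hxF⟩
    by_cases hcase : k ≤ F.card
    · obtain ⟨X, hXF, hXcard⟩ := Finset.exists_subset_card_eq hcase
      refine hder X hXcard (finset_image_eq_self σ X ?_)
      intro y hy
      have : σ y = y := by
        have := hXF hy
        simpa [hF] using this
      rw [this]; exact hy
    · push_neg at hcase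
      -- build invariant set: (F.erase x) ∪ Y with Y ⊆ M invariant of even size
      have hEd : Even (k + 1 - F.card) := by
        rw [Nat.even_iff] at hFeven ⊢
        rw [Nat.odd_iff] at hk
        omega
      obtain ⟨m, hm⟩ := hEd
      have hmle : 2 * m ≤ M.card := by omega
      obtain ⟨Y, hYM, hYmap, hYcard⟩ :=
        exists_invariant_subset_s10 σ h1 m M hMmap hMfree hmle
      set X := (F.erase x) ∪ Y with hX
      have hdisj : Disjoint (F.erase x) Y := by
        rw [Finset.disjoint_left]
        intro y hyF hyY
        have h1' : σ y = y := by simpa [hF] using (Finset.mem_of_mem_erase hyF)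
        have h2' : ¬ σ y = y := by simpa [hM] using (hYM hyY)
        exact h2' h1'
      have hXcard : X.card = k := by
        rw [hX, Finset.card_union_of_disjoint hdisj, Finset.card_erase_of_mem hxF,
          hYcard]
        omega
      refine hder X hXcard (finset_image_eq_self σ X ?_)
      intro y hy
      rw [hX, Finset.mem_union] at hy ⊢
      rcases hy with hy | hy
      · left
        have h1' : σ y = y := by simpa [hF] using (Finset.mem_of_mem_erase hy)
        rw [h1']; exact hy
      · right; exact hYmap y hy
  · rintro ⟨h1, hfree⟩
    constructor
    · intro X hXcard him
      have hXmap : ∀ y ∈ X, σ y ∈ X := by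
        intro y hy
        rw [← him]
        exact Finset.mem_image_of_mem σ hy
      have := card_filter_fixed_parity (fun y => σ y) X hXmap
        (fun y _ => invol_apply h1 y)
      have hemp : (X.filter fun y => σ y = y) = ∅ := by
        rw [Finset.filter_eq_empty_iff]
        exact fun y _ => hfree y
      rw [hemp] at this
      simp only [Finset.card_empty] at this
      rw [hXcard] at this
      rw [Nat.odd_iff] at hk
      omega
    · exact inv_eq_of_mul_eq_one_left h1

end Fixed

section Count

variable {n : ℕ}

/-- The number of involutions that move exactly the points of `S` (with no fixed point
inside `S`) is odd, when `S` has even cardinality. -/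
lemma odd_card_fpf_invol : ∀ S : Finset (Fin n), Even S.card →
    Odd ((Finset.univ.filter (fun σ : Equiv.Perm (Fin n) =>
      σ * σ = 1 ∧ (∀ x ∈ S, σ x ≠ x) ∧ ∀ x ∉ S, σ x = x)).card) := by
  intro S
  induction S using Finset.strongInduction with
  | _ S ih =>
    intro hS
    rcases S.eq_empty_or_nonempty with rfl | ⟨a, ha⟩
    · have h : (Finset.univ.filter (fun σ : Equiv.Perm (Fin n) =>
          σ * σ = 1 ∧ (∀ x ∈ (∅ : Finset (Fin n)), σ x ≠ x) ∧
            ∀ x ∉ (∅ : Finset (Fin n)), σ x = x)) = {1} := by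
        ext σ
        simp only [Finset.mem_filter, Finset.mem_univ, true_and, Finset.notMem_empty,
          Finset.mem_singleton]
        constructor
        · rintro ⟨-, -, hid⟩
          exact Equiv.ext fun x => hid x (by simp)
        · rintro rfl
          refine ⟨by simp, fun x hx => ?_, fun x _ => rfl⟩
          simp at hx
      rw [h, Finset.card_singleton]
      exact odd_one
    · set big := Finset.univ.filter (fun σ : Equiv.Perm (Fin n) =>
        σ * σ = 1 ∧ (∀ x ∈ S, σ x ≠ x) ∧ ∀ x ∉ S, σ x = x) with hbig
      have hfib : big.card = ∑ b ∈ S.erase a,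
          (big.filter (fun σ => σ a = b)).card := by
        refine Finset.card_eq_sum_card_fiberwise ?_
        intro σ hσ
        simp only [Finset.mem_coe, hbig, Finset.mem_filter] at hσ
        obtain ⟨-, h1, hf, hid⟩ := hσ
        exact Finset.mem_erase.mpr ⟨hf a ha, maps_of_invol h1 hf hid a ha⟩
      have hScard : 2 ≤ S.card ∧ Even S.card := ⟨by
        rcases Nat.even_iff.mp hS with h
        have : 1 ≤ S.card := Finset.card_pos.mpr ⟨a, ha⟩
        omega, hS⟩
      have hterm : ∀ b ∈ S.erase a,
          ((big.filter (fun σ => σ a = b)).card) % 2 = 1 := by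
        intro b hbmem
        obtain ⟨hba, hb⟩ := Finset.mem_erase.mp hbmem
        set S' := (S.erase a).erase b with hS'
        have hS'subS : S' ⊆ S := (Finset.erase_subset _ _).trans (Finset.erase_subset _ _)
        have hS'ssub : S' ⊂ S := by
          refine Finset.ssubset_iff_of_subset hS'subS |>.mpr ⟨a, ha, ?_⟩
          simp [hS']
        have haS' : a ∉ S' := fun h => (Finset.notMem_erase a S)
          (Finset.mem_of_mem_erase h)
        have hbS' : b ∉ S' := Finset.notMem_erase b _
        have hS'card : S'.card = S.card - 2 := by
          rw [hS', Finset.card_erase_of_mem (Finset.mem_erase.mpr ⟨hba, hb⟩),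
            Finset.card_erase_of_mem ha]
          omega
        have hS'even : Even S'.card := by
          rw [Nat.even_iff] at hS ⊢
          omega
        have hmemS' : ∀ x, x ∈ S' ↔ (x ∈ S ∧ x ≠ a ∧ x ≠ b) := by
          intro x
          simp only [hS', Finset.mem_erase]
          tauto
        have hbij : (big.filter (fun σ => σ a = b)).card =
            (Finset.univ.filter (fun σ : Equiv.Perm (Fin n) =>
              σ * σ = 1 ∧ (∀ x ∈ S', σ x ≠ x) ∧ ∀ x ∉ S', σ x = x)).card := by
          refine Finset.card_bij (fun σ _ => Equiv.swap a b * σ) ?_ ?_ ?_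
          · -- maps into target
            intro σ hσ
            rw [Finset.mem_filter, hbig, Finset.mem_filter] at hσ
            obtain ⟨⟨-, h1, hf, hid⟩, hab⟩ := hσ
            have hba' : σ b = a := by rw [← hab]; exact invol_apply h1 a
            have hcomm : Equiv.swap a b * σ = σ * Equiv.swap a b := by
              have hsw := Equiv.swap_apply_apply σ a b
              rw [hab, hba', Equiv.swap_comm b a] at hsw
              calc Equiv.swap a b * σ = (σ * Equiv.swap a b * σ⁻¹) * σ := by
                    rw [← hsw]
                _ = σ * Equiv.swap a b := by rw [mul_assoc, inv_mul_cancel, mul_one]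
            rw [Finset.mem_filter]
            refine ⟨Finset.mem_univ _, ?_, ?_, ?_⟩
            · calc (Equiv.swap a b * σ) * (Equiv.swap a b * σ)
                  = Equiv.swap a b * (σ * Equiv.swap a b) * σ := by group
                _ = Equiv.swap a b * (Equiv.swap a b * σ) * σ := by rw [hcomm]
                _ = (Equiv.swap a b * Equiv.swap a b) * (σ * σ) := by group
                _ = 1 := by rw [Equiv.swap_mul_self, h1, one_mul]
            · intro x hx
              rw [hmemS' x] at hx
              obtain ⟨hxS, hxa, hxb⟩ := hx
              have hσx : σ x ≠ a := fun h => hxb (by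
                have := congrArg σ h
                rw [invol_apply h1 x, hab] at this
                exact this)
              have hσx' : σ x ≠ b := fun h => hxa (by
                have := congrArg σ h
                rw [invol_apply h1 x, hba'] at this
                exact this)
              rw [Equiv.Perm.mul_apply, Equiv.swap_apply_of_ne_of_ne hσx hσx']
              exact hf x hxS
            · intro x hx
              by_cases hxa : x = a
              · subst hxa
                rw [Equiv.Perm.mul_apply, hab, Equiv.swap_apply_right]
              · by_cases hxb : x = b
                · subst hxb
                  rw [Equiv.Perm.mul_apply, hba', Equiv.swap_apply_left]
                · have hxS : x ∉ S := by
                    intro hxS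
                    exact hx ((hmemS' x).mpr ⟨hxS, hxa, hxb⟩)
                  rw [Equiv.Perm.mul_apply, hid x hxS,
                    Equiv.swap_apply_of_ne_of_ne hxa hxb]
          · -- injective
            intro σ1 h1 σ2 h2 heq
            exact mul_left_cancel heq
          · -- surjective
            intro τ hτ
            rw [Finset.mem_filter] at hτ
            obtain ⟨-, t1, tf, tid⟩ := hτ
            have hta : τ a = a := tid a haS'
            have htb : τ b = b := tid b hbS'
            have hcomm : Equiv.swap a b * τ = τ * Equiv.swap a b := by
              have hsw := Equiv.swap_apply_apply τ a b
              rw [hta, htb] at hsw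
              calc Equiv.swap a b * τ = (τ * Equiv.swap a b * τ⁻¹) * τ := by
                    rw [← hsw]
                _ = τ * Equiv.swap a b := by rw [mul_assoc, inv_mul_cancel, mul_one]
            refine ⟨Equiv.swap a b * τ, ?_, ?_⟩
            · rw [Finset.mem_filter, hbig, Finset.mem_filter]
              have hsq : (Equiv.swap a b * τ) * (Equiv.swap a b * τ) = 1 := by
                calc (Equiv.swap a b * τ) * (Equiv.swap a b * τ)
                    = Equiv.swap a b * (τ * Equiv.swap a b) * τ := by group
                  _ = Equiv.swap a b * (Equiv.swap a b * τ) * τ := by rw [hcomm]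
                  _ = (Equiv.swap a b * Equiv.swap a b) * (τ * τ) := by group
                  _ = 1 := by rw [Equiv.swap_mul_self, t1, one_mul]
              have happly_a : (Equiv.swap a b * τ) a = b := by
                rw [Equiv.Perm.mul_apply, hta, Equiv.swap_apply_left]
              refine ⟨⟨Finset.mem_univ _, hsq, ?_, ?_⟩, happly_a⟩
              · intro x hx
                by_cases hxa : x = a
                · rw [hxa, happly_a]; exact hba
                · by_cases hxb : x = b
                  · rw [hxb, Equiv.Perm.mul_apply, htb, Equiv.swap_apply_right]
                    exact Ne.symm hba
                  · have hxS' : x ∈ S' := (hmemS' x).mpr ⟨hx, hxa, hxb⟩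
                    have hτx : τ x ∈ S' := maps_of_invol t1 tf tid x hxS'
                    have hτa : τ x ≠ a := fun h => haS' (h ▸ hτx)
                    have hτb : τ x ≠ b := fun h => hbS' (h ▸ hτx)
                    rw [Equiv.Perm.mul_apply, Equiv.swap_apply_of_ne_of_ne hτa hτb]
                    exact tf x hxS'
              · intro x hx
                have hxa : x ≠ a := fun h => hx (h ▸ ha)
                have hxb : x ≠ b := fun h => hx (h ▸ hb)
                have hxS' : x ∉ S' := fun h => hx (hS'subS h)
                rw [Equiv.Perm.mul_apply, tid x hxS',
                  Equiv.swap_apply_of_ne_of_ne hxa hxb]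
            · show Equiv.swap a b * (Equiv.swap a b * τ) = τ
              rw [← mul_assoc, Equiv.swap_mul_self, one_mul]
        rw [hbij]
        exact Nat.odd_iff.mp (ih S' hS'ssub hS'even)
      rw [Nat.odd_iff, hfib, Finset.sum_nat_mod, Finset.sum_congr rfl hterm,
        Finset.sum_const, smul_eq_mul, mul_one, Finset.card_erase_of_mem ha]
      rw [Nat.even_iff] at hS
      have : 1 ≤ S.card := Finset.card_pos.mpr ⟨a, ha⟩
      omega

end Count

/-- If `k` is odd, `n` is even, and `k < n`, then the number of `k`-derangements
in `S_n` is odd. -/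
theorem odd_numKDerangements_of_odd_even (n k : ℕ) (hk : Odd k) (hn : Even n) (hkn : k < n) :
    Odd (numKDerangements n k) := by
  have hcardeq : numKDerangements n k =
      (Finset.univ.filter (IsKDerangement n k)).card := by
    rw [numKDerangements, Nat.card_eq_fintype_card, Fintype.card_subtype]
  set s := Finset.univ.filter (IsKDerangement n k) with hs
  have hmap : ∀ σ ∈ s, σ⁻¹ ∈ s := by
    intro σ hσ
    rw [hs, Finset.mem_filter] at hσ ⊢
    exact ⟨Finset.mem_univ _, hσ.2.inv⟩
  have hparity := card_filter_fixed_parity (fun σ => σ⁻¹) s hmap (fun σ _ => inv_inv σ)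
  have hfeq : (s.filter fun σ => σ⁻¹ = σ) =
      Finset.univ.filter (fun σ : Equiv.Perm (Fin n) =>
        σ * σ = 1 ∧ (∀ x ∈ (Finset.univ : Finset (Fin n)), σ x ≠ x) ∧
          ∀ x ∉ (Finset.univ : Finset (Fin n)), σ x = x) := by
    ext σ
    simp only [hs, Finset.mem_filter, Finset.mem_univ, true_and]
    constructor
    · rintro ⟨hder, hfix⟩
      have h := (fixed_iff hk hn hkn σ).mp ⟨hder, hfix⟩
      exact ⟨h.1, fun x _ => h.2 x, fun x hx => absurd trivial hx⟩
    · rintro ⟨h1, h2, -⟩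
      have h := (fixed_iff hk hn hkn σ).mpr ⟨h1, fun x => h2 x trivial⟩
      exact ⟨h.1, h.2⟩
  have hodd := odd_card_fpf_invol (Finset.univ : Finset (Fin n)) (by simpa using hn)
  rw [hcardeq, Nat.odd_iff, hparity, hfeq]
  exact Nat.odd_iff.mp hodd
end

section
/- For k < n, the clique number of the k-derangement graph satisfies ω(Γ_{k,n}) ≤ C(n,k), the binomial coefficient n choose k. -/
/-- For `k < n`, the clique number of the `k`-derangement graph is at most `C(n,k)`. -/
theorem cliqueNum_derangementGraph_le (n k : ℕ) (hk : k < n) :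
    (derangementGraph n k).cliqueNum ≤ n.choose k := by
  obtain ⟨X₀, -, hX₀⟩ := Finset.exists_subset_card_eq
    (show k ≤ (Finset.univ : Finset (Fin n)).card by simpa using hk.le)
  have key : ∀ m ∈ {m | ∃ s, (derangementGraph n k).IsNClique m s}, m ≤ n.choose k := by
    rintro m ⟨s, hs⟩
    have : s.card ≤ (Finset.univ.powersetCard k : Finset (Finset (Fin n))).card := by
      refine Finset.card_le_card_of_injOn (fun σ => X₀.image σ) ?_ ?_
      · intro σ _
        simp only [Finset.mem_coe, Finset.mem_powersetCard]
        exact ⟨Finset.subset_univ _, by rw [Finset.card_image_of_injective _ σ.injective, hX₀]⟩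
      · intro σ hσ τ hτ hst
        by_contra hne
        have hadj := hs.1 hσ hτ hne
        have hcard : (X₀.image τ).card = k := by
          rw [Finset.card_image_of_injective _ τ.injective, hX₀]
        refine hadj.2 (X₀.image τ) hcard ?_
        have : (X₀.image τ).image (σ * τ⁻¹ : Equiv.Perm (Fin n)) = X₀.image σ := by
          rw [Finset.image_image]
          congr 1
          ext x
          simp [Equiv.Perm.mul_apply]
        rw [this]
        exact hst
    rw [Finset.card_powersetCard, Finset.card_univ, Fintype.card_fin] at this
    exact hs.2 ▸ this
  rw [SimpleGraph.cliqueNum]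
  exact csSup_le ⟨0, ∅, by simp⟩ key
end

section
/- If n = p^m is a power of an odd prime p (with m ≥ 1), then the clique number of the 2-derangement graph satisfies ω(Γ_{2,n}) = C(n,2) = n(n−1)/2. -/
section AuxCNDG

open Equiv

lemma permCongr_mul' {α β : Type*} (e : α ≃ β) (σ τ : Equiv.Perm α) :
    e.permCongr (σ * τ) = e.permCongr σ * e.permCongr τ :=
  (Equiv.permCongr_trans (e := e) τ σ).symm

lemma permCongr_inv' {α β : Type*} (e : α ≃ β) (σ : Equiv.Perm α) :
    e.permCongr σ⁻¹ = (e.permCongr σ)⁻¹ := by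
  rw [eq_inv_iff_mul_eq_one, ← permCongr_mul', inv_mul_cancel]
  ext x
  simp [Equiv.permCongr_apply, Equiv.Perm.one_def]

/-- An affine permutation `y ↦ s*y + t` (transported along `e`) with slope `≠ -1`
and not the identity has no invariant 2-set. -/
lemma isKDerangement_of_affine {K : Type*} [Field K] {n : ℕ} (e : K ≃ Fin n)
    (π : Equiv.Perm (Fin n)) (s t : K)
    (hπ : ∀ y : K, π (e y) = e (s * y + t)) (hsm : s ≠ -1) (h1 : s ≠ 1 ∨ t ≠ 0) :
    IsKDerangement n 2 π := by
  have hs0 : s ≠ 0 := by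
    rintro rfl
    have h01 : π (e 0) = π (e 1) := by rw [hπ, hπ]; ring_nf
    exact one_ne_zero (e.injective (π.injective h01)).symm
  intro X hX hfix
  obtain ⟨u, v, huv, rfl⟩ := Finset.card_eq_two.mp hX
  have himg : ({π u, π v} : Finset (Fin n)) = {u, v} := by
    simpa using hfix
  obtain ⟨x, hx⟩ : ∃ x : K, e x = u := ⟨e.symm u, e.apply_symm_apply u⟩
  obtain ⟨y, hy⟩ : ∃ y : K, e y = v := ⟨e.symm v, e.apply_symm_apply v⟩
  have hxy : x ≠ y := fun h => huv (by rw [← hx, ← hy, h])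
  subst hx hy
  rw [hπ x, hπ y] at himg
  have hmem1 : e (s * x + t) ∈ ({e x, e y} : Finset (Fin n)) := by
    rw [← himg]; exact Finset.mem_insert_self _ _
  have hmem2 : e (s * y + t) ∈ ({e x, e y} : Finset (Fin n)) := by
    rw [← himg]; exact Finset.mem_insert_of_mem (Finset.mem_singleton_self _)
  simp only [Finset.mem_insert, Finset.mem_singleton, e.apply_eq_iff_eq] at hmem1 hmem2
  rcases hmem1 with h1x | h1y
  · -- π fixes x
    rcases hmem2 with h2x | h2y
    · exact hxy (mul_left_cancel₀ hs0 (show s * x = s * y by linear_combination h1x - h2x))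
    · -- both fixed: slope 1, t = 0
      have hs1 : s = 1 := by
        have h0 : (s - 1) * (x - y) = 0 := by linear_combination h1x - h2y
        rcases mul_eq_zero.mp h0 with h | h
        · linear_combination h
        · exact absurd (sub_eq_zero.mp h) hxy
      have ht0 : t = 0 := by linear_combination h1x - x * hs1
      rcases h1 with h | h
      · exact h hs1
      · exact h ht0
  · -- π swaps x and y
    rcases hmem2 with h2x | h2y
    · have h0 : (s + 1) * (x - y) = 0 := by linear_combination h1y - h2x
      rcases mul_eq_zero.mp h0 with h | h
      · exact hsm (by linear_combination h)
      · exact hxy (sub_eq_zero.mp h)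
    · exact hxy (mul_left_cancel₀ hs0 (show s * x = s * y by linear_combination h1y - h2y))

end AuxCNDG

/-- If `n = p^m` is a power of an odd prime, then the clique number of the
`2`-derangement graph equals `C(n,2) = n(n-1)/2`. -/
theorem cliqueNum_derangementGraph_two (n p m : ℕ) (hp : p.Prime) (hodd : Odd p)
    (hm : 1 ≤ m) (hn : n = p ^ m) :
    (derangementGraph n 2).cliqueNum = n.choose 2 ∧
      (derangementGraph n 2).cliqueNum = n * (n - 1) / 2 := by
  haveI : Fact p.Prime := ⟨hp⟩
  have hm0 : m ≠ 0 := by omega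
  have hp2 : p ≠ 2 := by
    rintro rfl
    simp [Nat.odd_iff] at hodd
  have hn3 : 3 ≤ n := by
    have h1 : 3 ≤ p := by
      rcases hp.two_le.lt_or_eq with h | h
      · omega
      · exact absurd h.symm hp2
    have h2 : p ≤ p ^ m := Nat.le_self_pow hm0 p
    omega
  set K := GaloisField p m with hK
  have h2K : (2 : K) ≠ 0 := by
    have h : ((2 : ℕ) : K) ≠ 0 := by
      rw [Ne, CharP.cast_eq_zero_iff K p 2]
      intro hd
      exact hp2 ((Nat.prime_dvd_prime_iff_eq hp Nat.prime_two).mp hd)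
    simpa using h
  haveI : Finite K := Nat.finite_of_card_ne_zero (by
    rw [GaloisField.card p m hm0]; exact (pow_pos hp.pos m).ne')
  haveI : Fintype K := Fintype.ofFinite K
  have hcardK : Fintype.card K = n := by
    rw [← Nat.card_eq_fintype_card, GaloisField.card p m hm0, hn]
  let e : K ≃ Fin n := Fintype.equivFinOfCardEq hcardK
  -- Upper bound
  have hub : (derangementGraph n 2).cliqueNum ≤ n.choose 2 := by
    obtain ⟨sF, hsc, hscard⟩ := (derangementGraph n 2).exists_isNClique_cliqueNum
    rw [← hscard]
    have h0 : (0 : ℕ) < n := by omega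
    have h1 : (1 : ℕ) < n := by omega
    have huv : (⟨0, h0⟩ : Fin n) ≠ ⟨1, h1⟩ := by simp [Fin.ext_iff]
    set X₀ : Finset (Fin n) := {⟨0, h0⟩, ⟨1, h1⟩} with hX₀
    have hX₀card : X₀.card = 2 := Finset.card_pair huv
    calc sF.card ≤ (Finset.univ.powersetCard 2 : Finset (Finset (Fin n))).card := by
          refine Finset.card_le_card_of_injOn (fun σ => X₀.image σ) ?_ ?_
          · intro σ _
            simp only [Finset.mem_coe, Finset.mem_powersetCard]
            exact ⟨Finset.subset_univ _,
              by rw [Finset.card_image_of_injective _ σ.injective, hX₀card]⟩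
          · intro σ hσ τ hτ hfeq
            by_contra hne
            obtain ⟨-, hder⟩ := hsc hσ hτ hne
            refine hder (X₀.image τ)
              (by rw [Finset.card_image_of_injective _ τ.injective, hX₀card]) ?_
            rw [Finset.image_image]
            have hcomp : (⇑(σ * τ⁻¹)) ∘ ⇑τ = ⇑σ := by
              funext x; simp [Equiv.Perm.mul_apply]
            rw [hcomp]
            exact hfeq
      _ = n.choose 2 := by
          rw [Finset.card_powersetCard, Finset.card_univ, Fintype.card_fin]
  -- Lower bound
  have hlb : n.choose 2 ≤ (derangementGraph n 2).cliqueNum := by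
    classical
    set N : Subgroup Kˣ := Subgroup.zpowers (-1 : Kˣ) with hN
    haveI : Fintype (Kˣ ⧸ N) := Fintype.ofFinite _
    set A : (Kˣ ⧸ N) → Kˣ := fun q => Quotient.out q with hA
    have hAinj : Function.Injective A := Quotient.out_injective
    have hAmk : ∀ q, ((A q : Kˣ) : Kˣ ⧸ N) = q := fun q => QuotientGroup.out_eq' q
    set F : (Kˣ ⧸ N) × K → Equiv.Perm (Fin n) := fun z =>
      e.permCongr ((Equiv.mulLeft₀ ((A z.1 : Kˣ) : K) (Units.ne_zero _)).trans
        (Equiv.addRight z.2)) with hF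
    have hFapp : ∀ z y, F z (e y) = e (((A z.1 : Kˣ) : K) * y + z.2) := by
      intro z y
      simp [hF, Equiv.permCongr_apply, Equiv.trans_apply]
    have hFinj : Function.Injective F := by
      intro z w h
      have h0 : e (((A z.1 : Kˣ) : K) * 0 + z.2) = e (((A w.1 : Kˣ) : K) * 0 + w.2) := by
        rw [← hFapp z 0, h, hFapp w 0]
      have h1 : e (((A z.1 : Kˣ) : K) * 1 + z.2) = e (((A w.1 : Kˣ) : K) * 1 + w.2) := by
        rw [← hFapp z 1, h, hFapp w 1]
      rw [e.apply_eq_iff_eq] at h0 h1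
      simp only [mul_zero, zero_add, mul_one] at h0 h1
      have ha : ((A z.1 : Kˣ) : K) = ((A w.1 : Kˣ) : K) := by linear_combination h1 - h0
      exact Prod.ext (by rw [← hAmk z.1, ← hAmk w.1, Units.ext ha]) h0
    have hcardN : Nat.card N = 2 := by
      rw [hN, Nat.card_zpowers]
      refine orderOf_eq_prime (by simp) ?_
      intro h
      have h2 : (-1 : K) = 1 := by simpa using congrArg Units.val h
      exact h2K (by linear_combination -h2)
    have hcardU : Nat.card Kˣ = n - 1 := by
      rw [Nat.card_units, Nat.card_eq_fintype_card, hcardK]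
    have hcardQ : Nat.card (Kˣ ⧸ N) * 2 = n - 1 := by
      rw [← hcardN, ← Subgroup.card_eq_card_quotient_mul_card_subgroup, hcardU]
    set T : Finset (Equiv.Perm (Fin n)) := Finset.univ.image F with hT
    have hTcard : T.card = n.choose 2 := by
      rw [hT, Finset.card_image_of_injective _ hFinj, Finset.card_univ, Fintype.card_prod,
        hcardK, Nat.choose_two_right, ← Nat.card_eq_fintype_card (α := Kˣ ⧸ N), ← hcardQ,
        show n * (Nat.card (Kˣ ⧸ N) * 2) = Nat.card (Kˣ ⧸ N) * n * 2 by ring,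
        Nat.mul_div_cancel _ (by norm_num)]
    have hclique : (derangementGraph n 2).IsClique ↑T := by
      intro σ hσ τ hτ hne
      simp only [hT, Finset.coe_image, Set.mem_image, Finset.mem_coe] at hσ hτ
      obtain ⟨z, -, rfl⟩ := hσ
      obtain ⟨w, -, rfl⟩ := hτ
      refine ⟨hne, ?_⟩
      have hzw : z ≠ w := fun h => hne (by rw [h])
      have hcne : ((A w.1 : Kˣ) : K) ≠ 0 := Units.ne_zero _
      refine isKDerangement_of_affine e _
        (((A z.1 : Kˣ) : K) * ((A w.1 : Kˣ) : K)⁻¹)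
        (z.2 - ((A z.1 : Kˣ) : K) * ((A w.1 : Kˣ) : K)⁻¹ * w.2) ?_ ?_ ?_
      · intro y
        have hiv : (F w)⁻¹ (e y) = e (((A w.1 : Kˣ) : K)⁻¹ * (y - w.2)) := by
          rw [Equiv.Perm.inv_eq_iff_eq, hFapp]
          congr 1
          rw [mul_inv_cancel_left₀ hcne]; ring
        rw [Equiv.Perm.mul_apply, hiv, hFapp]
        congr 1
        ring
      · intro hs
        have hu : A z.1 * (A w.1)⁻¹ = -1 := Units.ext (by
          rw [Units.val_mul, Units.val_inv_eq_inv_val, Units.val_neg, Units.val_one]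
          exact hs)
        have hmk : z.1 = w.1 := by
          rw [← hAmk z.1, ← hAmk w.1, QuotientGroup.eq]
          have hinv : (A z.1)⁻¹ * A w.1 = (A z.1 * (A w.1)⁻¹)⁻¹ := by
            rw [mul_inv_rev, inv_inv, mul_comm]
          rw [hinv, hu, hN]
          exact Subgroup.mem_zpowers (-1 : Kˣ)
        rw [hmk] at hu
        have h1 : (1 : Kˣ) = -1 := (mul_inv_cancel (A w.1)).symm.trans hu
        have h2 : (1 : K) = -1 := by simpa using congrArg Units.val h1
        exact h2K (by linear_combination h2)
      · by_contra hcon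
        push_neg at hcon
        obtain ⟨hs1, ht0⟩ := hcon
        have hac : ((A z.1 : Kˣ) : K) = ((A w.1 : Kˣ) : K) :=
          (mul_inv_eq_one₀ hcne).mp hs1
        have h1 : z.1 = w.1 := by rw [← hAmk z.1, ← hAmk w.1, Units.ext hac]
        have hb : z.2 = w.2 := by
          rw [hs1, one_mul] at ht0
          linear_combination ht0
        exact hzw (Prod.ext h1 hb)
    calc n.choose 2 = T.card := hTcard.symm
      _ ≤ (derangementGraph n 2).cliqueNum :=
          @SimpleGraph.IsClique.card_le_cliqueNum _ (derangementGraph n 2) _ T hclique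
  have heq : (derangementGraph n 2).cliqueNum = n.choose 2 := le_antisymm hub hlb
  exact ⟨heq, heq.trans (Nat.choose_two_right n)⟩
end
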